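/- Let E₁ and E₂ be categories with finite limits and H : E₁ → E₂ a finite-limit-preserving functor. Then the assignment (X₁, X₂) ↦ (X₁, HX₁ × X₂) underlies a cartesian comonad G on the product category E₁ × E₂, and the comma category (E₂ ↓ H) is isomorphic to the category (E₁ × E₂)_G of G-coalgebras. -/

import Mathlib

open CategoryTheory CategoryTheory.Limits

universe v₁ u₁ v₂ u₂

variable {E₁ : Type u₁} [Category.{v₁} E₁] {E₂ : Type u₂} [Category.{v₂} E₂]

/-- The endofunctor `(X₁, X₂) ↦ (X₁, HX₁ × X₂)` on `E₁ × E₂` associated with a functor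
`H : E₁ ⥤ E₂`. -/
@[simps]
noncomputable def glueFunctor [HasBinaryProducts E₂] (H : E₁ ⥤ E₂) : E₁ × E₂ ⥤ E₁ × E₂ where
  obj X := (X.1, H.obj X.1 ⨯ X.2)
  map f := (f.1, prod.map (H.map f.1) f.2)
  map_id X := by dsimp; rw [H.map_id, prod.map_id_id]
  map_comp f g := by
    dsimp
    exact Prod.ext rfl (by rw [H.map_comp, ← prod.map_map]; rfl)

attribute [local simp] glueFunctor

section Helpers

variable {C : Type*} [Category C] {D : Type*} [Category D] {J : Type*} [Category J]

/-- A cone in a product category whose two component cones are limit cones is a limit cone. -/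
noncomputable def isLimitOfComponents {F : J ⥤ C × D} (c : Cone F)
    (h₁ : IsLimit ((CategoryTheory.Prod.fst C D).mapCone c))
    (h₂ : IsLimit ((CategoryTheory.Prod.snd C D).mapCone c)) :
    IsLimit c where
  lift s := (h₁.lift ((CategoryTheory.Prod.fst C D).mapCone s),
    h₂.lift ((CategoryTheory.Prod.snd C D).mapCone s))
  fac s j := Prod.ext (h₁.fac _ j) (h₂.fac _ j)
  uniq s m w := Prod.ext
    (h₁.uniq ((CategoryTheory.Prod.fst C D).mapCone s) m.1
      (fun j => congrArg Prod.fst (w j)))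
    (h₂.uniq ((CategoryTheory.Prod.snd C D).mapCone s) m.2
      (fun j => congrArg Prod.snd (w j)))

/-- Auxiliary cone used in `fstIsLimit`. -/
@[simps]
noncomputable def fstAuxCone {F : J ⥤ C × D} (c : Cone F)
    (s : Cone (F ⋙ CategoryTheory.Prod.fst C D)) : Cone F where
  pt := (s.pt, c.pt.2)
  π :=
    { app := fun j => (s.π.app j, (c.π.app j).2)
      naturality := fun j j' f => by
        apply Prod.ext
        · have h1 := s.π.naturality f
          dsimp at h1 ⊢
          simpa using h1
        · have h2 := congrArg Prod.snd (c.π.naturality f)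
          dsimp at h2 ⊢
          simpa using h2 }

/-- The first component of a limit cone in a product category is a limit cone. -/
noncomputable def fstIsLimit {F : J ⥤ C × D} {c : Cone F} (hc : IsLimit c) :
    IsLimit ((CategoryTheory.Prod.fst C D).mapCone c) where
  lift s := (hc.lift (fstAuxCone c s)).1
  fac s j := congrArg Prod.fst (hc.fac _ j)
  uniq s m w := by
    have := hc.uniq (fstAuxCone c s) (m, 𝟙 c.pt.2)
      (fun j => Prod.ext (w j) (by dsimp; exact Category.id_comp _))
    exact congrArg Prod.fst this

/-- Auxiliary cone used in `sndIsLimit`. -/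
@[simps]
noncomputable def sndAuxCone {F : J ⥤ C × D} (c : Cone F)
    (s : Cone (F ⋙ CategoryTheory.Prod.snd C D)) : Cone F where
  pt := (c.pt.1, s.pt)
  π :=
    { app := fun j => ((c.π.app j).1, s.π.app j)
      naturality := fun j j' f => by
        apply Prod.ext
        · have h1 := congrArg Prod.fst (c.π.naturality f)
          dsimp at h1 ⊢
          simpa using h1
        · have h2 := s.π.naturality f
          dsimp at h2 ⊢
          simpa using h2 }

/-- The second component of a limit cone in a product category is a limit cone. -/
noncomputable def sndIsLimit {F : J ⥤ C × D} {c : Cone F} (hc : IsLimit c) :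
    IsLimit ((CategoryTheory.Prod.snd C D).mapCone c) where
  lift s := (hc.lift (sndAuxCone c s)).2
  fac s j := congrArg Prod.snd (hc.fac _ j)
  uniq s m w := by
    have := hc.uniq (sndAuxCone c s) (𝟙 c.pt.1, m)
      (fun j => Prod.ext (by dsimp; exact Category.id_comp _) (w j))
    exact congrArg Prod.snd this

end Helpers

section Glue

variable [HasBinaryProducts E₂] (H : E₁ ⥤ E₂)

/-- The comonad structure on `glueFunctor H`. -/
noncomputable def glueComonad : Comonad (E₁ × E₂) where
  toFunctor := glueFunctor H
  ε :=
    { app := fun X => (𝟙 X.1, prod.snd)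
      naturality := fun X Y f => Prod.ext (by simp) (by simp) }
  δ :=
    { app := fun X => (𝟙 X.1, prod.lift prod.fst (𝟙 _))
      naturality := fun X Y f => Prod.ext (by simp) (by
        dsimp
        show prod.map (H.map f.1) f.2 ≫ (prod.lift prod.fst (𝟙 _) : H.obj Y.1 ⨯ Y.2 ⟶ H.obj Y.1 ⨯ (H.obj Y.1 ⨯ Y.2)) = (prod.lift prod.fst (𝟙 _) : H.obj X.1 ⨯ X.2 ⟶ H.obj X.1 ⨯ (H.obj X.1 ⨯ X.2)) ≫ prod.map (H.map f.1) (prod.map (H.map f.1) f.2)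
        apply Limits.prod.hom_ext <;> simp) }
  coassoc X := Prod.ext (by simp) (by
    dsimp
    show (prod.lift prod.fst (𝟙 _) : H.obj X.1 ⨯ X.2 ⟶ H.obj X.1 ⨯ (H.obj X.1 ⨯ X.2)) ≫ prod.map (H.map (𝟙 X.1)) (prod.lift prod.fst (𝟙 _) : H.obj X.1 ⨯ X.2 ⟶ H.obj X.1 ⨯ (H.obj X.1 ⨯ X.2)) = (prod.lift prod.fst (𝟙 _) : H.obj X.1 ⨯ X.2 ⟶ H.obj X.1 ⨯ (H.obj X.1 ⨯ X.2)) ≫ (prod.lift prod.fst (𝟙 _) : H.obj X.1 ⨯ (H.obj X.1 ⨯ X.2) ⟶ H.obj X.1 ⨯ (H.obj X.1 ⨯ (H.obj X.1 ⨯ X.2)))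
    apply Limits.prod.hom_ext
    · simp
      erw [prod.lift_fst, prod.lift_fst, prod.lift_fst]
    · simp
      erw [prod.lift_snd, prod.lift_snd])
  left_counit X := Prod.ext (by simp) (by dsimp; show (prod.lift prod.fst (𝟙 _) : H.obj X.1 ⨯ X.2 ⟶ H.obj X.1 ⨯ (H.obj X.1 ⨯ X.2)) ≫ prod.snd = 𝟙 _; exact prod.lift_snd _ _)
  right_counit X := Prod.ext (by simp) (by
    dsimp
    show (prod.lift prod.fst (𝟙 _) : H.obj X.1 ⨯ X.2 ⟶ H.obj X.1 ⨯ (H.obj X.1 ⨯ X.2)) ≫ prod.map (H.map (𝟙 X.1)) (prod.snd : H.obj X.1 ⨯ X.2 ⟶ X.2) = 𝟙 (H.obj X.1 ⨯ X.2)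
    apply Limits.prod.hom_ext <;> simp)

@[simp] lemma glueComonad_toFunctor : (glueComonad H).toFunctor = glueFunctor H := rfl

@[simp] lemma glueComonad_ε_app (X : E₁ × E₂) :
    (glueComonad H).ε.app X = (𝟙 X.1, (prod.snd : H.obj X.1 ⨯ X.2 ⟶ X.2)) := rfl

@[simp] lemma glueComonad_δ_app (X : E₁ × E₂) :
    (glueComonad H).δ.app X =
      ((𝟙 X.1 : X.1 ⟶ X.1),
        (prod.lift prod.fst (𝟙 _) : H.obj X.1 ⨯ X.2 ⟶ H.obj X.1 ⨯ (H.obj X.1 ⨯ X.2))) := rfl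

/-- The functor from the comma category to coalgebras. -/
noncomputable def glueK : Comma (𝟭 E₂) H ⥤ (glueComonad H).Coalgebra where
  obj X :=
    { A := (X.right, X.left)
      a := (𝟙 X.right, prod.lift X.hom (𝟙 X.left))
      counit := Prod.ext (by simp) (by
        show (prod.lift X.hom (𝟙 X.left) : X.left ⟶ H.obj X.right ⨯ X.left) ≫ prod.snd = 𝟙 X.left
        exact prod.lift_snd _ _)
      coassoc := Prod.ext (by simp) (by
        dsimp
        show (prod.lift X.hom (𝟙 X.left) : X.left ⟶ H.obj X.right ⨯ X.left) ≫ (prod.lift prod.fst (𝟙 _) : H.obj X.right ⨯ X.left ⟶ H.obj X.right ⨯ (H.obj X.right ⨯ X.left)) = (prod.lift X.hom (𝟙 X.left) : X.left ⟶ H.obj X.right ⨯ X.left) ≫ prod.map (H.map (𝟙 X.right)) (prod.lift X.hom (𝟙 X.left) : X.left ⟶ H.obj X.right ⨯ X.left)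
        apply Limits.prod.hom_ext
        · simp
          erw [prod.lift_fst, prod.lift_fst, prod.lift_fst]
        · simp
          erw [prod.lift_snd, prod.lift_snd]) }
  map {X Y} g :=
    { f := (g.right, g.left)
      h := Prod.ext (by simp) (by
        dsimp
        show (prod.lift X.hom (𝟙 X.left) : X.left ⟶ H.obj X.right ⨯ X.left) ≫ prod.map (H.map g.right) g.left = g.left ≫ (prod.lift Y.hom (𝟙 Y.left) : Y.left ⟶ H.obj Y.right ⨯ Y.left)
        apply Limits.prod.hom_ext
        · have := g.w
          dsimp at this
          simp [← this]
        · simp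
          erw [prod.lift_snd, prod.lift_snd]) }
  map_id X := by
    apply Comonad.Coalgebra.Hom.ext
    rfl
  map_comp f g := by
    apply Comonad.Coalgebra.Hom.ext
    rfl

/-- The functor from coalgebras to the comma category. -/
noncomputable def glueK' : (glueComonad H).Coalgebra ⥤ Comma (𝟭 E₂) H where
  obj V :=
    { left := V.A.2
      right := V.A.1
      hom := V.a.2 ≫ prod.fst }
  map {V W} g :=
    { left := g.f.2
      right := g.f.1
      w := by
        have h2 : V.a.2 ≫ prod.map (H.map g.f.1) g.f.2 = g.f.2 ≫ W.a.2 := congrArg Prod.snd g.h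
        dsimp at h2 ⊢
        rw [← Category.assoc, ← h2]
        simp }
  map_id V := rfl
  map_comp f g := rfl

/-- Auxiliary cone: the first projection of a cone over the second component of the glued
diagram. -/
@[simps]
noncomputable def coneAux₁ {J : Type*} [Category J] {F : J ⥤ E₁ × E₂}
    (s : Cone ((F ⋙ glueFunctor H) ⋙ CategoryTheory.Prod.snd E₁ E₂)) :
    Cone ((F ⋙ CategoryTheory.Prod.fst E₁ E₂) ⋙ H) where
  pt := s.pt
  π :=
    { app := fun j => s.π.app j ≫ prod.fst
      naturality := fun j j' f => by
        have := s.w f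
        dsimp at this ⊢
        rw [Category.id_comp, ← this]
        simp }

/-- Auxiliary cone: the second projection of a cone over the second component of the glued
diagram. -/
@[simps]
noncomputable def coneAux₂ {J : Type*} [Category J] {F : J ⥤ E₁ × E₂}
    (s : Cone ((F ⋙ glueFunctor H) ⋙ CategoryTheory.Prod.snd E₁ E₂)) :
    Cone (F ⋙ CategoryTheory.Prod.snd E₁ E₂) where
  pt := s.pt
  π :=
    { app := fun j => s.π.app j ≫ prod.snd
      naturality := fun j j' f => by
        have := s.w f
        dsimp at this ⊢
        rw [Category.id_comp, ← this]
        simp }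

end Glue

lemma coalgebra_eqToHom_f {C : Type*} [Category C] {G : Comonad C} {A B : G.Coalgebra}
    (h : A = B) : (eqToHom h).f = eqToHom (congrArg Comonad.Coalgebra.A h) := by
  subst h; rfl

/-- for a finite-limit-preserving functor `H : E₁ ⥤ E₂` between categories with
finite limits, the assignment `(X₁, X₂) ↦ (X₁, HX₁ × X₂)` underlies a cartesian comonad `G`
on `E₁ × E₂`, and the comma category `(E₂ ↓ H)` is isomorphic to the category of
`G`-coalgebras. -/
theorem comma_iso_coalgebras [HasFiniteLimits E₁] [HasFiniteLimits E₂]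
    (H : E₁ ⥤ E₂) [PreservesFiniteLimits H] :
    ∃ G : Comonad (E₁ × E₂), G.toFunctor = glueFunctor H ∧
      PreservesFiniteLimits G.toFunctor ∧
      ∃ (K : Comma (𝟭 E₂) H ⥤ G.Coalgebra) (K' : G.Coalgebra ⥤ Comma (𝟭 E₂) H),
        K ⋙ K' = 𝟭 (Comma (𝟭 E₂) H) ∧ K' ⋙ K = 𝟭 G.Coalgebra := by
  refine ⟨glueComonad H, rfl, ?_, glueK H, glueK' H, ?_, ?_⟩
  · -- preservation of finite limits
    constructor
    intro J _ _
    constructor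
    intro F
    constructor
    intro c hc
    constructor
    apply isLimitOfComponents
    · exact fstIsLimit (c := c) hc
    · have h₁ : IsLimit (H.mapCone ((CategoryTheory.Prod.fst E₁ E₂).mapCone c)) :=
        isLimitOfPreserves H (fstIsLimit hc)
      have h₂ := sndIsLimit hc
      exact
        { lift := fun s => prod.lift (h₁.lift (coneAux₁ H s)) (h₂.lift (coneAux₂ H s))
          fac := fun s j => by
            dsimp
            apply Limits.prod.hom_ext
            · erw [Category.assoc, prod.map_fst, prod.lift_fst_assoc]
              exact h₁.fac (coneAux₁ H s) j
            · erw [Category.assoc, prod.map_snd, prod.lift_snd_assoc]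
              exact h₂.fac (coneAux₂ H s) j
          uniq := fun s m w => by
            dsimp
            apply Limits.prod.hom_ext
            · erw [prod.lift_fst]
              refine h₁.uniq (coneAux₁ H s) _ (fun j => ?_)
              have := w j
              dsimp at this ⊢
              show (m ≫ prod.fst) ≫ H.map (c.π.app j).1 = s.π.app j ≫ prod.fst
              rw [← this]
              erw [Category.assoc, Category.assoc, prod.map_fst]
              rfl
            · erw [prod.lift_snd]
              refine h₂.uniq (coneAux₂ H s) _ (fun j => ?_)
              have := w j
              dsimp at this ⊢
              show (m ≫ prod.snd) ≫ (c.π.app j).2 = s.π.app j ≫ prod.snd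
              rw [← this]
              erw [Category.assoc, Category.assoc, prod.map_snd]
              rfl }
  · -- K ⋙ K' = 𝟭
    have hobj : ∀ X, (glueK H ⋙ glueK' H).obj X = (𝟭 (Comma (𝟭 E₂) H)).obj X := by
      intro X
      cases X
      dsimp [glueK, glueK']
      congr 1
      simp
      exact prod.lift_fst _ _
    exact CategoryTheory.Functor.ext hobj (fun X Y f => by
      apply CommaMorphism.ext <;>
        simp [glueK, glueK', Comma.eqToHom_left, Comma.eqToHom_right]
      · erw [Comma.eqToHom_left, Comma.eqToHom_left, eqToHom_refl, eqToHom_refl,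
          Category.id_comp, Category.comp_id]
      · erw [Comma.eqToHom_right, Comma.eqToHom_right, eqToHom_refl, eqToHom_refl,
          Category.id_comp, Category.comp_id])
  · -- K' ⋙ K = 𝟭
    have hobj : ∀ A, (glueK' H ⋙ glueK H).obj A = (𝟭 (glueComonad H).Coalgebra).obj A := by
      intro A
      obtain ⟨A, a, h1, h2⟩ := A
      have ha1 : a.1 = 𝟙 A.1 := by
        have : a.1 ≫ 𝟙 A.1 = 𝟙 A.1 := congrArg Prod.fst h1
        dsimp at this
        simpa using this
      have ha2 : a.2 ≫ (prod.snd : H.obj A.1 ⨯ A.2 ⟶ A.2) = 𝟙 A.2 := by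
        have : a.2 ≫ (prod.snd : H.obj A.1 ⨯ A.2 ⟶ A.2) = 𝟙 A.2 := congrArg Prod.snd h1
        dsimp at this
        simpa using this
      have ha : a = (𝟙 A.1, prod.lift (a.2 ≫ prod.fst) (𝟙 A.2)) := by
        refine Prod.ext ha1 ?_
        show @Eq (A.2 ⟶ H.obj A.1 ⨯ A.2) a.2 (prod.lift (a.2 ≫ prod.fst) (𝟙 A.2))
        apply Limits.prod.hom_ext
        · exact (prod.lift_fst _ _).symm
        · erw [prod.lift_snd]
          exact ha2
      dsimp [glueK, glueK']
      congr 1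
      exact ha.symm
    exact CategoryTheory.Functor.ext hobj (fun A B f => by
      apply Comonad.Coalgebra.Hom.ext
      rw [Comonad.Coalgebra.comp_f, Comonad.Coalgebra.comp_f,
        coalgebra_eqToHom_f, coalgebra_eqToHom_f]
      simp [glueK, glueK']
      erw [eqToHom_fst, eqToHom_snd, eqToHom_refl, eqToHom_refl, Category.id_comp, Category.id_comp]
      rfl)
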